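/- arXiv:2409.02652 — 4 statements merged into one kernel-verified Lean document; each statement's English description precedes it below -/
import Mathlib

section
/- If the matrix M is symmetric positive definite and B has rank n_p (equivalently, Bᵀ has full column rank), then the (n_u+n_p)×(n_u+n_p) block saddle-point matrix [[M, Bᵀ],[B, 0]] is invertible. -/
open Matrix

lemma aux_inj {nu np : ℕ} (B : Matrix (Fin np) (Fin nu) ℝ) (hB : B.rank = np)
    {x : Fin np → ℝ} (hx : x ≠ 0) : Bᵀ *ᵥ x ≠ 0 := by
  have hrT : Bᵀ.rank = np := by rw [rank_transpose]; exact hB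
  have h := Bᵀ.mulVecLin.finrank_range_add_finrank_ker
  have hker : LinearMap.ker Bᵀ.mulVecLin = ⊥ := by
    rw [Matrix.rank] at hrT
    have : Module.finrank ℝ (LinearMap.ker Bᵀ.mulVecLin) = 0 := by
      have hd : Module.finrank ℝ (Fin np → ℝ) = np := by simp
      omega
    exact Submodule.finrank_eq_zero.mp this
  intro h0
  exact hx (by simpa [LinearMap.ker_eq_bot'] using LinearMap.ker_eq_bot'.mp hker x h0)

/-- If `M` is SPD and `B` has full row rank `n_p`, the saddle-point block
matrix `[[M, Bᵀ],[B, 0]]` is invertible. -/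
theorem stmt_3 (nu np : ℕ) (hnu : 0 < nu) (hnp : 0 < np) (hle : np ≤ nu)
    (M : Matrix (Fin nu) (Fin nu) ℝ) (hM : M.PosDef)
    (B : Matrix (Fin np) (Fin nu) ℝ) (hB : B.rank = np) :
    IsUnit (Matrix.fromBlocks M Bᵀ B (0 : Matrix (Fin np) (Fin np) ℝ)) := by
  haveI : Invertible M := hM.isUnit.invertible
  rw [isUnit_fromBlocks_iff_of_invertible₁₁]
  have hMinv : (M⁻¹).PosDef := hM.inv
  have hN : (B * M⁻¹ * Bᵀ).PosDef := by
    rw [posDef_iff_dotProduct_mulVec]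
    constructor
    · have := (hMinv.posSemidef.mul_mul_conjTranspose_same B).1
      simpa using this
    · intro x hx
      have hy : Bᵀ *ᵥ x ≠ 0 := aux_inj B hB hx
      have key : star x ⬝ᵥ (B * M⁻¹ * Bᵀ) *ᵥ x
          = star (Bᵀ *ᵥ x) ⬝ᵥ M⁻¹ *ᵥ (Bᵀ *ᵥ x) := by
        rw [star_trivial, star_trivial, ← mulVec_mulVec, ← mulVec_mulVec, dotProduct_mulVec, mulVec_transpose]
      rw [key]
      exact hMinv.dotProduct_mulVec_pos hy
  have : IsUnit (B * M⁻¹ * Bᵀ) := hN.isUnit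
  rw [Matrix.isUnit_iff_isUnit_det]
  rw [Matrix.invOf_eq_nonsing_inv]
  have : (0 - B * M⁻¹ * Bᵀ).det = (-1)^np * (B * M⁻¹ * Bᵀ).det := by
    rw [zero_sub, det_neg]; simp
  rw [this]
  exact (isUnit_one.neg.pow np).mul ((Matrix.isUnit_iff_isUnit_det _).mp hN.isUnit)
end

section
/- If B has rank n_p, then the subspace { x ∈ ℝ^{n_u+n_p} : Ā x = P x } has dimension at least n_u − n_p; that is, the eigenvalue 1 of the preconditioned matrix P⁻¹ Ā has geometric multiplicity at least n_u − n_p. -/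
open Matrix

private def extLin (nu np : ℕ) : (Fin nu → ℝ) →ₗ[ℝ] (Fin nu ⊕ Fin np → ℝ) where
  toFun u := Sum.elim u 0
  map_add' u v := by funext x; cases x <;> simp
  map_smul' c u := by funext x; cases x <;> simp

/-- If `B` has rank `n_p`, the eigenspace `{x : Ā x = P x}` of the eigenvalue 1
of `P⁻¹ Ā` has dimension at least `n_u − n_p`. -/
theorem stmt_8 (nu np : ℕ) (hnu : 0 < nu) (hnp : 0 < np) (hle : np ≤ nu)
    (A : Matrix (Fin nu) (Fin nu) ℝ) (hA : A.PosDef)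
    (B : Matrix (Fin np) (Fin nu) ℝ) (hB : B.rank = np)
    (Q : Matrix (Fin np) (Fin np) ℝ) (hQ : Q.PosDef)
    (γ α : ℝ) (hγ : 0 < γ) (hα : 0 < α)
    (S : Matrix (Fin nu) (Fin nu) ℝ) (hS : S = Bᵀ * Q⁻¹ * B)
    (Abar P : Matrix (Fin nu ⊕ Fin np) (Fin nu ⊕ Fin np) ℝ)
    (hAbar : Abar = Matrix.fromBlocks (A + γ • S) Bᵀ B 0)
    (hP : P = Matrix.fromBlocks (A + γ • S) ((1 - γ / α) • Bᵀ)
        0 ((-α⁻¹) • Q)) :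
    nu - np ≤ Module.finrank ℝ
      ↥(LinearMap.ker (Matrix.mulVecLin (Abar - P))) := by
  -- the map from ker B into ker (Abar - P)
  have hmem : ∀ u ∈ LinearMap.ker B.mulVecLin,
      extLin nu np u ∈ LinearMap.ker (Matrix.mulVecLin (Abar - P)) := by
    intro u hu
    have hu' : B *ᵥ u = 0 := hu
    simp only [LinearMap.mem_ker, Matrix.mulVecLin_apply]
    have : Abar - P = Matrix.fromBlocks 0 (Bᵀ - (1 - γ / α) • Bᵀ) B (α⁻¹ • Q) := by
      rw [hAbar, hP]
      ext i j
      cases i <;> cases j <;> simp [Matrix.fromBlocks]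
    rw [this]
    show Matrix.fromBlocks 0 (Bᵀ - (1 - γ / α) • Bᵀ) B (α⁻¹ • Q) *ᵥ Sum.elim u 0 = 0
    rw [Matrix.fromBlocks_mulVec]
    funext x
    cases x <;> simp [hu']
  let g : LinearMap.ker B.mulVecLin →ₗ[ℝ] LinearMap.ker (Matrix.mulVecLin (Abar - P)) :=
    LinearMap.codRestrict _ ((extLin nu np).comp (Submodule.subtype _))
      (fun x => hmem x.1 x.2)
  have hginj : Function.Injective g := by
    intro x y hxy
    ext i
    have := congrFun (congrArg Subtype.val hxy) (Sum.inl i)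
    simpa [g, extLin] using this
  have hdim : Module.finrank ℝ (LinearMap.ker B.mulVecLin) = nu - np := by
    have h1 := LinearMap.finrank_range_add_finrank_ker B.mulVecLin
    have h2 : Module.finrank ℝ (LinearMap.range B.mulVecLin) = np := hB
    rw [h2, Module.finrank_fin_fun] at h1
    omega
  calc nu - np = Module.finrank ℝ (LinearMap.ker B.mulVecLin) := hdim.symm
    _ ≤ _ := LinearMap.finrank_le_finrank_of_injective hginj
end

section
/- If λ ∈ ℝ with λ ≠ 0 and λ ≠ 1, and (u; p) ∈ ℝ^{n_u+n_p} satisfies Ā (u; p) = λ P (u; p), then p = −(α/λ) Q⁻¹ B u and u satisfies the quadratic matrix equation λ² (A + γS) u − λ (A + αS) u + α S u = 0. -/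
open Matrix

/-- If `λ ≠ 0`, `λ ≠ 1` and `Ā (u; p) = λ P (u; p)`, then
`p = −(α/λ) Q⁻¹ B u` and `λ²(A + γS)u − λ(A + αS)u + αSu = 0`. -/
theorem stmt_11 (nu np : ℕ) (hnu : 0 < nu) (hnp : 0 < np)
    (A : Matrix (Fin nu) (Fin nu) ℝ) (hA : A.PosDef)
    (B : Matrix (Fin np) (Fin nu) ℝ)
    (Q : Matrix (Fin np) (Fin np) ℝ) (hQ : Q.PosDef)
    (γ α : ℝ) (hγ : 0 < γ) (hα : 0 < α)
    (S : Matrix (Fin nu) (Fin nu) ℝ) (hS : S = Bᵀ * Q⁻¹ * B)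
    (Abar P : Matrix (Fin nu ⊕ Fin np) (Fin nu ⊕ Fin np) ℝ)
    (hAbar : Abar = Matrix.fromBlocks (A + γ • S) Bᵀ B 0)
    (hP : P = Matrix.fromBlocks (A + γ • S) ((1 - γ / α) • Bᵀ)
        0 ((-α⁻¹) • Q))
    (lam : ℝ) (hlam0 : lam ≠ 0) (hlam1 : lam ≠ 1)
    (u : Fin nu → ℝ) (p : Fin np → ℝ)
    (heig : Abar.mulVec (Sum.elim u p) = lam • P.mulVec (Sum.elim u p)) :
    p = (-(α / lam)) • (Q⁻¹ * B).mulVec u ∧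
      lam ^ 2 • (A + γ • S).mulVec u - lam • (A + α • S).mulVec u
        + α • S.mulVec u = 0 := by
  subst hAbar hP
  rw [Matrix.fromBlocks_mulVec, Matrix.fromBlocks_mulVec] at heig
  -- component equations
  have h1 : ∀ i, ((A + γ • S) *ᵥ u) i + (Bᵀ *ᵥ p) i
      = lam * (((A + γ • S) *ᵥ u) i + (1 - γ / α) * (Bᵀ *ᵥ p) i) := by
    intro i
    have := congrFun heig (Sum.inl i)
    simpa [Matrix.smul_mulVec, Matrix.mulVec_add, mul_add] using this
  have h2 : ∀ j, (B *ᵥ u) j = lam * (-α⁻¹) * (Q *ᵥ p) j := by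
    intro j
    have := congrFun heig (Sum.inr j)
    simpa [Matrix.smul_mulVec, Matrix.neg_mulVec, mul_assoc] using this
  -- Q p = -(α/lam) • (B u)
  have hQp : Q *ᵥ p = (-(α / lam)) • (B *ᵥ u) := by
    funext j
    have := h2 j
    simp only [Pi.smul_apply, smul_eq_mul]
    field_simp at this ⊢
    linarith [this]
  have hQdet : IsUnit Q.det := isUnit_iff_ne_zero.mpr hQ.det_pos.ne'
  have hp : p = (-(α / lam)) • (Q⁻¹ * B) *ᵥ u := by
    have : Q⁻¹ *ᵥ (Q *ᵥ p) = p := by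
      rw [Matrix.mulVec_mulVec, Matrix.nonsing_inv_mul Q hQdet, Matrix.one_mulVec]
    rw [← this, hQp, Matrix.mulVec_smul, Matrix.mulVec_mulVec]
  refine ⟨hp, ?_⟩
  -- Bᵀ p = -(α/lam) • S u
  have hBtp : Bᵀ *ᵥ p = (-(α / lam)) • (S *ᵥ u) := by
    rw [hp, Matrix.mulVec_smul, Matrix.mulVec_mulVec, hS, Matrix.mul_assoc]
  funext i
  have h1i := h1 i
  rw [hBtp] at h1i
  simp only [Matrix.add_mulVec, Matrix.smul_mulVec, Pi.add_apply, Pi.smul_apply,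
    Pi.sub_apply, Pi.zero_apply, smul_eq_mul] at h1i ⊢
  set a := (A *ᵥ u) i
  set s := (S *ᵥ u) i
  have hne : α * lam ≠ 0 := mul_ne_zero hα.ne' hlam0
  have key : (α * lam) * (lam ^ 2 * (a + γ * s) - lam * (a + α * s) + α * s) = 0 := by
    field_simp at h1i
    linear_combination (-(α * lam)) * h1i
  have := mul_eq_zero.mp key
  tauto
end

section
/- Suppose B has rank n_p. If λ ∈ ℝ and (u; p) ∈ ℝ^{n_u+n_p} is nonzero with Ā (u; p) = λ P (u; p), then λ > 0. In particular, every real eigenvalue of the preconditioned matrix P⁻¹ Ā is positive. -/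
set_option maxHeartbeats 1000000


open Matrix

/-- If `B` has full row rank, then `Bᵀ *ᵥ p = 0` implies `p = 0`. -/
lemma aux_transpose_mulVec_eq_zero {nu np : ℕ} (B : Matrix (Fin np) (Fin nu) ℝ)
    (hB : B.rank = np) (p : Fin np → ℝ) (h : Bᵀ.mulVec p = 0) : p = 0 := by
  have hrank : Bᵀ.rank = np := by rw [Matrix.rank_transpose]; exact hB
  have hker : p ∈ LinearMap.ker (Bᵀ.mulVecLin) := LinearMap.mem_ker.mpr (by
    rw [Matrix.mulVecLin_apply]; exact h)
  have hrn : Bᵀ.rank + Module.finrank ℝ (LinearMap.ker Bᵀ.mulVecLin) = np := by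
    have := LinearMap.finrank_range_add_finrank_ker (Bᵀ.mulVecLin)
    simpa [Matrix.rank] using this
  have h0 : Module.finrank ℝ (LinearMap.ker Bᵀ.mulVecLin) = 0 := by omega
  have hbot : LinearMap.ker Bᵀ.mulVecLin = ⊥ := Submodule.finrank_eq_zero.mp h0
  rw [hbot] at hker
  exact (Submodule.mem_bot ℝ).mp hker

/-- Every real generalized eigenvalue of the preconditioned matrix `P⁻¹ Ā` is
positive: if `B` has rank `n_p`, `(u; p) ≠ 0` and `Ā (u; p) = λ P (u; p)`,
then `λ > 0`. -/
theorem stmt_14 (nu np : ℕ) (hnu : 0 < nu) (hnp : 0 < np) (hle : np ≤ nu)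
    (A : Matrix (Fin nu) (Fin nu) ℝ) (hA : A.PosDef)
    (B : Matrix (Fin np) (Fin nu) ℝ) (hB : B.rank = np)
    (Q : Matrix (Fin np) (Fin np) ℝ) (hQ : Q.PosDef)
    (γ α : ℝ) (hγ : 0 < γ) (hα : 0 < α)
    (S : Matrix (Fin nu) (Fin nu) ℝ) (hS : S = Bᵀ * Q⁻¹ * B)
    (Abar P : Matrix (Fin nu ⊕ Fin np) (Fin nu ⊕ Fin np) ℝ)
    (hAbar : Abar = Matrix.fromBlocks (A + γ • S) Bᵀ B 0)
    (hP : P = Matrix.fromBlocks (A + γ • S) ((1 - γ / α) • Bᵀ)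
        0 ((-α⁻¹) • Q))
    (lam : ℝ) (u : Fin nu → ℝ) (p : Fin np → ℝ)
    (hne : Sum.elim u p ≠ 0)
    (heig : Abar.mulVec (Sum.elim u p) = lam • P.mulVec (Sum.elim u p)) :
    0 < lam := by
  have hα' : α ≠ 0 := ne_of_gt hα
  subst hAbar hP
  rw [Matrix.fromBlocks_mulVec, Matrix.fromBlocks_mulVec] at heig
  -- block equations
  have eq1 : (A + γ • S).mulVec u + Bᵀ.mulVec p
      = lam • ((A + γ • S).mulVec u + ((1 - γ / α) • Bᵀ).mulVec p) := by
    funext i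
    have := congrFun heig (Sum.inl i)
    simpa using this
  have eq2 : B.mulVec u = lam • (((-α⁻¹) • Q).mulVec p) := by
    funext j
    have := congrFun heig (Sum.inr j)
    simpa using this
  have eq2' : B.mulVec u = (-(lam * α⁻¹)) • (Q.mulVec p) := by
    rw [eq2, Matrix.smul_mulVec, smul_smul]
    ring_nf
  clear heig
  -- scalars
  obtain ⟨a, ha_def⟩ : ∃ a : ℝ, a = u ⬝ᵥ A.mulVec u := ⟨_, rfl⟩
  obtain ⟨q, hq_def⟩ : ∃ q : ℝ, q = p ⬝ᵥ Q.mulVec p := ⟨_, rfl⟩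
  have hqpos : p ≠ 0 → 0 < q := fun hp => by rw [hq_def]; simpa using hQ.dotProduct_mulVec_pos hp
  have hapos : u ≠ 0 → 0 < a := fun hu => by rw [ha_def]; simpa using hA.dotProduct_mulVec_pos hu
  have hq0 : 0 ≤ q := by
    rcases eq_or_ne p 0 with h | h
    · simp [hq_def, h]
    · exact (hqpos h).le
  have ha0 : 0 ≤ a := by
    rcases eq_or_ne u 0 with h | h
    · simp [ha_def, h]
    · exact (hapos h).le
  -- t = u ⬝ᵥ Bᵀ p = (B u) ⬝ᵥ p = -(lam/α) q
  have hcomm : (Q.mulVec p) ⬝ᵥ p = q := by rw [hq_def]; exact dotProduct_comm _ _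
  have ht : u ⬝ᵥ Bᵀ.mulVec p = (-(lam * α⁻¹)) * q := by
    rw [dotProduct_mulVec, Matrix.vecMul_transpose, eq2', smul_dotProduct, smul_eq_mul, hcomm]
  -- s = u ⬝ᵥ S u = (lam/α)^2 q
  have hQinv : Q⁻¹.mulVec (Q.mulVec p) = p := by
    rw [Matrix.mulVec_mulVec, Matrix.nonsing_inv_mul Q (isUnit_iff_ne_zero.mpr hQ.det_pos.ne'),
      Matrix.one_mulVec]
  have hs : u ⬝ᵥ S.mulVec u = (lam * α⁻¹)^2 * q := by
    rw [hS]
    have hassoc : (Bᵀ * Q⁻¹ * B).mulVec u = Bᵀ.mulVec (Q⁻¹.mulVec (B.mulVec u)) := by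
      simp [Matrix.mulVec_mulVec, Matrix.mul_assoc]
    rw [hassoc, dotProduct_mulVec, Matrix.vecMul_transpose, eq2']
    rw [Matrix.mulVec_smul, hQinv, smul_dotProduct, smul_eq_mul, dotProduct_smul, smul_eq_mul,
      hcomm]
    ring
  -- dot eq1 with u
  have key0 : u ⬝ᵥ ((A + γ • S).mulVec u) + u ⬝ᵥ (Bᵀ.mulVec p)
      = lam * (u ⬝ᵥ ((A + γ • S).mulVec u) + (1 - γ / α) * (u ⬝ᵥ (Bᵀ.mulVec p))) := by
    have h := congrArg (fun v => u ⬝ᵥ v) eq1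
    simp only [dotProduct_add, dotProduct_smul, smul_eq_mul, Matrix.smul_mulVec,
      mul_add] at h
    linarith [h]
  have hMs : u ⬝ᵥ ((A + γ • S).mulVec u) = a + γ * ((lam * α⁻¹)^2 * q) := by
    rw [Matrix.add_mulVec, dotProduct_add, Matrix.smul_mulVec, dotProduct_smul,
      smul_eq_mul, hs, ha_def]
  have key : a + γ * ((lam * α⁻¹)^2 * q) + (-(lam * α⁻¹)) * q
      = lam * (a + γ * ((lam * α⁻¹)^2 * q)) + lam * (1 - γ / α) * ((-(lam * α⁻¹)) * q) := by
    rw [hMs, ht] at key0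
    linear_combination key0
  by_contra hcon
  push_neg at hcon
  have hβ : 0 < α⁻¹ := inv_pos.mpr hα
  have key2 : (1 - lam) * a = lam * q * α⁻¹ * (γ * lam ^ 2 * α⁻¹ + 1 - lam) := by
    linear_combination key
  have hbr : 0 < γ * lam ^ 2 * α⁻¹ + 1 - lam := by nlinarith [sq_nonneg lam]
  have hRHS : lam * q * α⁻¹ * (γ * lam ^ 2 * α⁻¹ + 1 - lam) ≤ 0 := by
    have h1 : lam * q * α⁻¹ ≤ 0 := by
      have := mul_nonneg hq0 hβ.le
      nlinarith
    exact mul_nonpos_of_nonpos_of_nonneg h1 hbr.le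
  have ha_zero : a = 0 := by nlinarith
  have hu0 : u = 0 := by
    by_contra hu
    exact absurd ha_zero (ne_of_gt (hapos hu))
  have hp0 : p ≠ 0 := by
    intro hp
    exact hne (by rw [hu0, hp]; ext (i | j) <;> simp)
  have hqp : 0 < q := hqpos hp0
  have hlam0 : lam = 0 := by
    rcases lt_or_eq_of_le hcon with hlt | heq
    · exfalso
      have : lam * q * α⁻¹ * (γ * lam ^ 2 * α⁻¹ + 1 - lam) < 0 := by
        have h1 : lam * q * α⁻¹ < 0 := by
          have := mul_pos hqp hβ
          nlinarith
        exact mul_neg_of_neg_of_pos h1 hbr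
      rw [ha_zero] at key2
      nlinarith
    · exact heq.symm ▸ rfl
  rw [hlam0, hu0] at eq1
  simp [Matrix.mulVec_zero] at eq1
  exact hp0 (aux_transpose_mulVec_eq_zero B hB p eq1)
end
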